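/- Let N be a closed smooth oriented 14-dimensional manifold, let κ_b, κ_{b̄} ∈ H^1(N; Z/2) be two cohomology classes, and suppose the stable normal bundle of N is isomorphic to k·λ_b ⊕ k·λ_{b̄}, where λ_b, λ_{b̄} are real line bundles with first Stiefel–Whitney classes κ_b, κ_{b̄} respectively, and k ≡ 0 (mod 8). Then the characteristic number ⟨κ_b · κ_{b̄}^{13}, [N]⟩ ∈ Z/2 vanishes. -/
import Mathlib


/-- The mod-2 cohomology of a closed smooth `n`-manifold, axiomatized: a graded
commutative `ℤ/2`-algebra `R` vanishing above degree `n`, with Steenrod squares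
(satisfying instability and the Cartan formula), evaluation `ε` against the
`ℤ/2`-fundamental class (Kronecker pairing, supported in degree `n`), Poincaré
duality, the Wu classes `v k` (characterized by `⟨v_k · x, [N]⟩ = ⟨Sq^k x, [N]⟩`),
and the Stiefel–Whitney classes `w i` of the tangent bundle, which by Wu's
theorem satisfy `w = Sq(v)`. -/
structure ClosedManifoldMod2Cohomology (n : ℕ) (R : Type*) [CommRing R]
    [Algebra (ZMod 2) R] where
  /-- the degree-`i` part of the cohomology -/
  deg : ℕ → Submodule (ZMod 2) R
  one_mem : (1 : R) ∈ deg 0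
  mul_mem : ∀ {i j : ℕ} {x y : R}, x ∈ deg i → y ∈ deg j → x * y ∈ deg (i + j)
  deg_eq_bot : ∀ i : ℕ, n < i → deg i = ⊥
  decompose : ∀ x : R, ∃ c : ℕ → R, (∀ i, c i ∈ deg i) ∧
    x = ∑ i ∈ Finset.range (n + 1), c i
  /-- evaluation against the fundamental class -/
  ε : R →ₗ[ZMod 2] ZMod 2
  ε_deg : ∀ i : ℕ, i ≠ n → ∀ x ∈ deg i, ε x = 0
  /-- Poincaré duality: the intersection pairing is nondegenerate -/
  pd : ∀ i : ℕ, i ≤ n → ∀ x ∈ deg i, x ≠ 0 → ∃ y ∈ deg (n - i), ε (x * y) ≠ 0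
  /-- Steenrod squares -/
  sq : ℕ → R →ₗ[ZMod 2] R
  sq_deg : ∀ (k i : ℕ), ∀ x ∈ deg i, sq k x ∈ deg (i + k)
  sq_zero_of_lt : ∀ (k i : ℕ), ∀ x ∈ deg i, i < k → sq k x = 0
  sq_zero_eq_id : ∀ x : R, sq 0 x = x
  sq_eq_sq : ∀ k : ℕ, ∀ x ∈ deg k, sq k x = x * x
  sq_cartan : ∀ (k : ℕ) (x y : R),
    sq k (x * y) = ∑ p ∈ Finset.range (k + 1), sq p x * sq (k - p) y
  /-- Wu classes -/
  v : ℕ → R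
  v_deg : ∀ k, v k ∈ deg k
  v_spec : ∀ k : ℕ, ∀ x ∈ deg (n - k), ε (v k * x) = ε (sq k x)
  /-- Stiefel–Whitney classes of the tangent bundle -/
  w : ℕ → R
  w_deg : ∀ i, w i ∈ deg i
  /-- Wu's theorem: `w = Sq(v)` -/
  w_wu : ∀ m : ℕ, w m = ∑ k ∈ Finset.range (m + 1), sq k (v (m - k))

namespace ClosedManifoldMod2Cohomology
variable {n : ℕ} {R : Type*} [CommRing R] [Algebra (ZMod 2) R]
  (P : ClosedManifoldMod2Cohomology n R)

lemma two_zero' (R : Type*) [CommRing R] [Algebra (ZMod 2) R] : (2 : R) = 0 := by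
  have h := map_natCast (algebraMap (ZMod 2) R) 2
  have h0 : ((2:ℕ) : ZMod 2) = 0 := by decide
  rw [h0, map_zero] at h
  exact_mod_cast h.symm

lemma pow_mem {x : R} (hx : x ∈ P.deg 1) (m : ℕ) : x ^ m ∈ P.deg m := by
  induction m with
  | zero => simpa using P.one_mem
  | succ m ih => simpa [pow_succ] using P.mul_mem ih hx

lemma eq_zero {i : ℕ} (h : n < i) {x : R} (hx : x ∈ P.deg i) : x = 0 := by
  rw [P.deg_eq_bot i h] at hx; simpa using hx

lemma sq1_mul (x y : R) : P.sq 1 (x*y) = P.sq 1 x * y + x * P.sq 1 y := by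
  rw [P.sq_cartan, Finset.sum_range_succ, Finset.sum_range_one]
  norm_num [P.sq_zero_eq_id]
  ring

lemma sq2_mul (x y : R) :
    P.sq 2 (x*y) = P.sq 2 x * y + P.sq 1 x * P.sq 1 y + x * P.sq 2 y := by
  rw [P.sq_cartan, Finset.sum_range_succ, Finset.sum_range_succ, Finset.sum_range_one]
  norm_num [P.sq_zero_eq_id]
  ring

lemma sq1_sq (z : R) : P.sq 1 (z*z) = 0 := by
  rw [P.sq1_mul]
  have h : P.sq 1 z * z + z * P.sq 1 z = 2 * (z * P.sq 1 z) := by ring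
  rw [h, two_zero' R, zero_mul]

lemma sq2_sq (z : R) : P.sq 2 (z*z) = P.sq 1 z * P.sq 1 z := by
  rw [P.sq2_mul]
  have h : P.sq 2 z * z + P.sq 1 z * P.sq 1 z + z * P.sq 2 z
      = P.sq 1 z * P.sq 1 z + 2 * (z * P.sq 2 z) := by ring
  rw [h, two_zero' R, zero_mul, add_zero]

lemma one_add_pow' (R : Type*) [CommRing R] {x : R} (hx : x * x = 0) (m : ℕ) :
    (1 + x)^m = 1 + (m : R) * x := by
  induction m with
  | zero => simp
  | succ m ih =>
    have h : (1 + (m:R)*x) * (1+x) = 1 + ((m:R)+1)*x + (m:R)*(x*x) := by ring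
    rw [pow_succ, ih, h, hx, mul_zero, add_zero]
    push_cast
    ring

lemma one_add_sq' (R : Type*) [CommRing R] [Algebra (ZMod 2) R] (b : R) :
    (1+b)^2 = 1 + b^2 := by
  have h : (1+b)^2 = 1 + b^2 + 2*b := by ring
  rw [h, two_zero' R, zero_mul, add_zero]

lemma one_add_pow8' (R : Type*) [CommRing R] [Algebra (ZMod 2) R] (y : R) :
    (1+y)^8 = 1 + y^8 := by
  have h : (1+y)^8 = (((1+y)^2)^2)^2 := by ring
  rw [h, one_add_sq' R, one_add_sq' R, one_add_sq' R]
  ring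

end ClosedManifoldMod2Cohomology


open ClosedManifoldMod2Cohomology

/-- Let `N` be a closed smooth oriented 14-manifold whose stable normal bundle is
`k·λ_b ⊕ k·λ_{b̄}` with `k ≡ 0 (mod 8)`, where `λ_b, λ_{b̄}` are line bundles with
first Stiefel–Whitney classes `κ_b, κ_{b̄} ∈ H¹(N; ℤ/2)` (so that the total
tangent Stiefel–Whitney class satisfies `w(TN)·(1+κ_b)^k·(1+κ_{b̄})^k = 1`).
Then the characteristic number `⟨κ_b · κ_{b̄}¹³, [N]⟩ ∈ ℤ/2` vanishes. -/
theorem stmt_17 (R : Type*) [CommRing R] [Algebra (ZMod 2) R]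
    (P : ClosedManifoldMod2Cohomology 14 R)
    (horient : P.w 1 = 0)
    (κb κbb : R) (hκb : κb ∈ P.deg 1) (hκbb : κbb ∈ P.deg 1)
    (k : ℕ) (hk : 8 ∣ k)
    (hnormal : (∑ i ∈ Finset.range 15, P.w i) * ((1 + κb) ^ k * (1 + κbb) ^ k) = 1) :
    P.ε (κb * κbb ^ 13) = 0 := by
  obtain ⟨m, rfl⟩ := hk
  have hb := P.pow_mem hκb
  have hbb := P.pow_mem hκbb
  have hb8sq : κb^8 * κb^8 = 0 :=
    P.eq_zero (i := 16) (by norm_num) (by simpa using P.mul_mem (hb 8) (hb 8))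
  have hbb8sq : κbb^8 * κbb^8 = 0 :=
    P.eq_zero (i := 16) (by norm_num) (by simpa using P.mul_mem (hbb 8) (hbb 8))
  have hQb : (1 + κb) ^ (8 * m) = 1 + (m:R) * κb^8 := by
    rw [pow_mul, one_add_pow8' R, one_add_pow' R hb8sq]
  have hQbb : (1 + κbb) ^ (8 * m) = 1 + (m:R) * κbb^8 := by
    rw [pow_mul, one_add_pow8' R, one_add_pow' R hbb8sq]
  -- Step 1 : w 2 = 0
  have hw2 : P.w 2 = 0 := by
    by_contra hne
    obtain ⟨y, hy, hεy⟩ := P.pd 2 (by norm_num) (P.w 2) (P.w_deg 2) hne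
    have hy12 : y ∈ P.deg 12 := by simpa using hy
    have h1 : κb^8 * y = 0 :=
      P.eq_zero (i := 20) (by norm_num) (by simpa using P.mul_mem (hb 8) hy12)
    have h2 : κbb^8 * y = 0 :=
      P.eq_zero (i := 20) (by norm_num) (by simpa using P.mul_mem (hbb 8) hy12)
    have hQy : ((1 + κb)^(8*m) * (1 + κbb)^(8*m)) * y = y := by
      rw [hQb, hQbb]
      have expand : (1 + (m:R)*κb^8) * (1 + (m:R)*κbb^8) * y
          = y + (m:R)*(κb^8*y) + (m:R)*(κbb^8*y)
            + ((m:R)*(m:R))*(κb^8*y*κbb^8) := by ring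
      rw [expand, h1, h2]
      ring
    have hsum : (∑ i ∈ Finset.range 15, P.w i) * y = y := by
      calc (∑ i ∈ Finset.range 15, P.w i) * y
          = (∑ i ∈ Finset.range 15, P.w i)
              * ((1 + κb)^(8*m) * (1 + κbb)^(8*m)) * y := by
            rw [mul_assoc, hQy]
        _ = y := by rw [hnormal, one_mul]
    have hε := congrArg P.ε hsum
    rw [Finset.sum_mul, map_sum] at hε
    have hεy0 : P.ε y = 0 := P.ε_deg 12 (by norm_num) y hy12
    have hterm : ∀ b ∈ Finset.range 15, b ≠ 2 → P.ε (P.w b * y) = 0 := by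
      intro b hbmem hbne
      refine P.ε_deg (b + 12) ?_ _ (P.mul_mem (P.w_deg b) hy12)
      simp only [Finset.mem_range] at hbmem
      omega
    rw [Finset.sum_eq_single_of_mem 2 (by norm_num) hterm, hεy0] at hε
    exact hεy hε
  -- Step 2 : v 1 = v 2 = 0
  have hsq1v0 : P.sq 1 (P.v 0) = 0 :=
    P.sq_zero_of_lt 1 0 (P.v 0) (P.v_deg 0) (by norm_num)
  have hsq2v0 : P.sq 2 (P.v 0) = 0 :=
    P.sq_zero_of_lt 2 0 (P.v 0) (P.v_deg 0) (by norm_num)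
  have hv1 : P.v 1 = 0 := by
    have h := P.w_wu 1
    rw [Finset.sum_range_succ, Finset.sum_range_one] at h
    norm_num [P.sq_zero_eq_id, hsq1v0, horient] at h
    simpa using h.symm
  have hv2 : P.v 2 = 0 := by
    have h := P.w_wu 2
    rw [Finset.sum_range_succ, Finset.sum_range_succ, Finset.sum_range_one] at h
    norm_num [P.sq_zero_eq_id, hsq2v0, hv1, hw2] at h
    simpa using h.symm
  -- Step 3 : Steenrod computations
  have hsq2κb : P.sq 2 κb = 0 := P.sq_zero_of_lt 2 1 κb hκb (by norm_num)
  have hsq1κb : P.sq 1 κb = κb * κb := P.sq_eq_sq 1 κb hκb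
  have hsq1κbb : P.sq 1 κbb = κbb * κbb := P.sq_eq_sq 1 κbb hκbb
  have hsq2κbb : P.sq 2 κbb = 0 := P.sq_zero_of_lt 2 1 κbb hκbb (by norm_num)
  have s1y2 : P.sq 1 (κbb^2) = 0 := by
    have h : κbb^2 = κbb * κbb := by ring
    rw [h, P.sq1_sq]
  have s1y4 : P.sq 1 (κbb^4) = 0 := by
    have h : κbb^4 = κbb^2 * κbb^2 := by ring
    rw [h, P.sq1_sq]
  have s1y8 : P.sq 1 (κbb^8) = 0 := by
    have h : κbb^8 = κbb^4 * κbb^4 := by ring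
    rw [h, P.sq1_sq]
  have s2y2 : P.sq 2 (κbb^2) = κbb^4 := by
    have h := P.sq_eq_sq 2 (κbb^2) (hbb 2)
    rw [h]; ring
  have s2y8 : P.sq 2 (κbb^8) = 0 := by
    have h : κbb^8 = κbb^4 * κbb^4 := by ring
    rw [h, P.sq2_sq, s1y4, mul_zero]
  have s1y3 : P.sq 1 (κbb^3) = κbb^4 := by
    have h : κbb^3 = κbb * κbb^2 := by ring
    rw [h, P.sq1_mul, s1y2, hsq1κbb]; ring
  have s2y3 : P.sq 2 (κbb^3) = κbb^5 := by
    have h : κbb^3 = κbb * κbb^2 := by ring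
    rw [h, P.sq2_mul, hsq2κbb, hsq1κbb, s1y2, s2y2]; ring
  have s1y11 : P.sq 1 (κbb^11) = κbb^12 := by
    have h : κbb^11 = κbb^8 * κbb^3 := by ring
    rw [h, P.sq1_mul, s1y8, s1y3]; ring
  have s2y11 : P.sq 2 (κbb^11) = κbb^13 := by
    have h : κbb^11 = κbb^8 * κbb^3 := by ring
    rw [h, P.sq2_mul, s2y8, s1y8, s1y3, s2y3]; ring
  have s1y12 : P.sq 1 (κbb^12) = 0 := by
    have h : κbb^12 = κbb^6 * κbb^6 := by ring
    rw [h, P.sq1_sq]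
  -- Step 4 : evaluate
  have hx13 : κb * κbb^12 ∈ P.deg 13 := by
    have h := P.mul_mem hκb (hbb 12); norm_num at h; exact h
  have hx12 : κb * κbb^11 ∈ P.deg 12 := by
    have h := P.mul_mem hκb (hbb 11); norm_num at h; exact h
  have hε1 : P.ε (κb * κb * κbb^12) = 0 := by
    have hv := P.v_spec 1 (κb * κbb^12) (by simpa using hx13)
    rw [hv1, zero_mul, map_zero] at hv
    have hs : P.sq 1 (κb * κbb^12) = κb * κb * κbb^12 := by
      rw [P.sq1_mul, s1y12, hsq1κb]; ring
    rw [← hs]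
    exact hv.symm
  have hε2 : P.ε (κb * κbb^13 + κb * κb * κbb^12) = 0 := by
    have hv := P.v_spec 2 (κb * κbb^11) (by simpa using hx12)
    rw [hv2, zero_mul, map_zero] at hv
    have hs : P.sq 2 (κb * κbb^11) = κb * κbb^13 + κb * κb * κbb^12 := by
      rw [P.sq2_mul, hsq2κb, hsq1κb, s1y11, s2y11]; ring
    rw [← hs]
    exact hv.symm
  have hfin : P.ε (κb * κbb^13) + P.ε (κb * κb * κbb^12) = 0 := by
    rw [← map_add]; exact hε2
  rw [hε1, add_zero] at hfin
  exact hfin
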